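/- Let G be a connected hypergraph with rank k and suppose 0 is an H-eigenvalue of the signless Laplacian Q_G with real eigenvector x. Then k is even, and for every edge e and every i ∈ e, x^e x_i^{k-|e|} = -x_j^k where |x_j| = max_i |x_i|; consequently, with V1 = {u : x_u = -|x_j|}, every edge of G has even cardinality and contains an odd number of vertices of V1, so G is odd-bipartite. -/

import Mathlib

open Finset

/-- The multiset of entries of an index tuple. -/
def idxMultiset {n k : ℕ} (idx : Fin k → Fin n) : Multiset (Fin n) := ↑(List.ofFn idx)

/-- Entries of the adjacency tensor of a general hypergraph with edge set `E` and rank `k`: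
`1/(k-1)!` on tuples that are permutations of an edge of size `k`;
`(k-s+1)!/k!` on tuples whose multiset is an edge of size `s < k` with one of its
vertices repeated `k-s+1` times; `0` otherwise. -/
noncomputable def adjEntry {R : Type*} [Field R] {n : ℕ} (k : ℕ)
    (E : Finset (Finset (Fin n))) (idx : Fin k → Fin n) : R :=
  ∑ e ∈ E,
    if e.card = k ∧ idxMultiset idx = e.val then 1 / (Nat.factorial (k - 1) : R)
    else if e.card < k ∧ ∃ j ∈ e, idxMultiset idx = e.val + Multiset.replicate (k - e.card) j then
      (Nat.factorial (k - e.card + 1) : R) / (Nat.factorial k : R)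
    else 0

/-- Full contraction `A x^k = ∑ a_{i₁…i_k} x_{i₁} ⋯ x_{i_k}`. -/
noncomputable def tFull {R : Type*} [CommRing R] {n : ℕ} (k : ℕ)
    (A : (Fin k → Fin n) → R) (x : Fin n → R) : R :=
  ∑ idx : Fin k → Fin n, A idx * ∏ j, x (idx j)

/-- `(A x^{k-1})_i = ∑_{i₂,…,i_k} a_{i i₂ … i_k} x_{i₂} ⋯ x_{i_k}`. -/
noncomputable def tApply {R : Type*} [CommRing R] {n : ℕ} (k : ℕ) [NeZero k]
    (A : (Fin k → Fin n) → R) (x : Fin n → R) (i : Fin n) : R :=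
  ∑ idx : Fin k → Fin n,
    if idx 0 = i then A idx * ∏ j ∈ Finset.univ.erase 0, x (idx j) else 0

/-- Degree of a vertex: the number of edges containing it. -/
def deg {n : ℕ} (E : Finset (Finset (Fin n))) (i : Fin n) : ℕ :=
  (E.filter (fun e => i ∈ e)).card

/-- `E` has rank `k`: all edges have size at most `k` and some edge has size `k`. -/
def HasRank {n : ℕ} (E : Finset (Finset (Fin n))) (k : ℕ) : Prop :=
  (∀ e ∈ E, e.card ≤ k) ∧ ∃ e ∈ E, e.card = k

/-- Connectedness of a hypergraph: any two vertices are joined by a sequence of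
vertices consecutively sharing an edge. -/
def Conn {n : ℕ} (E : Finset (Finset (Fin n))) : Prop :=
  ∀ u v : Fin n, Relation.ReflTransGen (fun a b => ∃ e ∈ E, a ∈ e ∧ b ∈ e) u v

/-- The spectral radius of a symmetric nonnegative tensor, via the variational
characterization `ρ(A) = max { x^T (A x^{k-1}) : x ≥ 0, ∑ xᵢ^k = 1 }`. -/
noncomputable def specRad {n : ℕ} (k : ℕ) (A : (Fin k → Fin n) → ℝ) : ℝ :=
  sSup {r : ℝ | ∃ x : Fin n → ℝ, (∀ i, 0 ≤ x i) ∧ ∑ i, x i ^ k = 1 ∧ r = tFull k A x}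

/-- Entries of the Laplacian tensor `L = D - A`. -/
noncomputable def lapEntry {R : Type*} [Field R] {n : ℕ} (k : ℕ) [NeZero k]
    (E : Finset (Finset (Fin n))) (idx : Fin k → Fin n) : R :=
  (if ∀ j, idx j = idx 0 then (deg E (idx 0) : R) else 0) - adjEntry k E idx

/-- Entries of the signless Laplacian tensor `Q = D + A`. -/
noncomputable def qEntry {R : Type*} [Field R] {n : ℕ} (k : ℕ) [NeZero k]
    (E : Finset (Finset (Fin n))) (idx : Fin k → Fin n) : R :=
  (if ∀ j, idx j = idx 0 then (deg E (idx 0) : R) else 0) + adjEntry k E idx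

namespace Stmt13Aux


variable {n : ℕ}

/-- Number of index tuples with a given multiset of entries. -/
def TT (r : ℕ) (m : Multiset (Fin n)) : ℕ :=
  ((univ : Finset (Fin r → Fin n)).filter (fun f => idxMultiset f = m)).card

/-- Number of index tuples with a given multiset of entries and given first entry. -/
def TF (r : ℕ) (i : Fin n) (m : Multiset (Fin n)) : ℕ :=
  ((univ : Finset (Fin (r + 1) → Fin n)).filter
    (fun f => f 0 = i ∧ idxMultiset f = m)).card

lemma idxMultiset_succ {r : ℕ} (f : Fin (r + 1) → Fin n) :
    idxMultiset f = f 0 ::ₘ idxMultiset (f ∘ Fin.succ) := by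
  simp only [idxMultiset, List.ofFn_succ, Multiset.cons_coe]
  rfl

lemma mem_idxMultiset_zero {r : ℕ} (f : Fin (r + 1) → Fin n) : f 0 ∈ idxMultiset f := by
  rw [idxMultiset_succ]; exact Multiset.mem_cons_self _ _

lemma TF_eq (r : ℕ) (i : Fin n) (m : Multiset (Fin n)) :
    TF r i m = if i ∈ m then TT r (m.erase i) else 0 := by
  split_ifs with hi
  · refine Finset.card_bij' (fun f _ => f ∘ Fin.succ) (fun g _ => Fin.cases i g) ?_ ?_ ?_ ?_
    · intro f hf
      simp only [Finset.mem_filter, Finset.mem_univ, true_and] at hf ⊢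
      rcases hf with ⟨h0, hm⟩
      rw [idxMultiset_succ, h0] at hm
      rw [← hm, Multiset.erase_cons_head]
    · intro g hg
      simp only [Finset.mem_filter, Finset.mem_univ, true_and] at hg ⊢
      constructor
      · simp
      · rw [idxMultiset_succ]
        simp only [Fin.cases_zero]
        have : (Fin.cases i g : Fin (r+1) → Fin n) ∘ Fin.succ = g := by
          funext l; simp
        rw [this, hg, Multiset.cons_erase hi]
    · intro f hf
      simp only [Finset.mem_filter, Finset.mem_univ, true_and] at hf
      funext l
      induction l using Fin.cases with
      | zero => simp [hf.1]
      | succ p => simp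
    · intro g _
      funext l; simp
  · rw [TF, Finset.card_eq_zero, Finset.filter_eq_empty_iff]
    intro f _
    rintro ⟨h0, hm⟩
    exact hi (h0 ▸ hm ▸ mem_idxMultiset_zero f)

lemma TT_succ (r : ℕ) (m : Multiset (Fin n)) :
    TT (r + 1) m = ∑ a ∈ m.toFinset, TT r (m.erase a) := by
  rw [TT, Finset.card_eq_sum_card_fiberwise (f := fun f => f 0) (t := m.toFinset)
    (s := (univ : Finset (Fin (r + 1) → Fin n)).filter (fun f => idxMultiset f = m))
    (fun f hf => by
      simp only [Finset.mem_coe, Finset.mem_filter, Finset.mem_univ, true_and] at hf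
      rw [Finset.mem_coe, Multiset.mem_toFinset, ← hf]; exact mem_idxMultiset_zero f)]
  refine Finset.sum_congr rfl fun a ha => ?_
  rw [Multiset.mem_toFinset] at ha
  rw [Finset.filter_filter]
  have hflt : (univ : Finset (Fin (r+1) → Fin n)).filter
      (fun f => idxMultiset f = m ∧ f 0 = a)
      = (univ : Finset (Fin (r+1) → Fin n)).filter (fun f => f 0 = a ∧ idxMultiset f = m) := by
    ext f; simp [and_comm]
  rw [hflt, ← TF, TF_eq, if_pos ha]

lemma TT_nodup : ∀ (r : ℕ) (s : Finset (Fin n)), s.card = r → TT r s.val = r.factorial := by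
  intro r
  induction r with
  | zero =>
    intro s hs
    rw [Finset.card_eq_zero] at hs
    subst hs
    rw [TT]
    have : ∀ f ∈ (univ : Finset (Fin 0 → Fin n)), idxMultiset f = (∅ : Finset (Fin n)).val := by
      intro f _
      simp [idxMultiset, List.ofFn_zero]
    rw [Finset.filter_true_of_mem this, Finset.card_univ]
    simp
  | succ r ih =>
    intro s hs
    rw [TT_succ, Finset.val_toFinset]
    have : ∀ a ∈ s, TT r (s.val.erase a) = r.factorial := by
      intro a ha
      rw [← Finset.erase_val]
      exact ih _ (by rw [Finset.card_erase_of_mem ha, hs]; rfl)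
    rw [Finset.sum_congr rfl this, Finset.sum_const, hs, smul_eq_mul, Nat.factorial_succ]

lemma TT_rep : ∀ (r t : ℕ) (s : Finset (Fin n)) (j : Fin n), j ∈ s → s.card + t = r →
    TT r (s.val + Multiset.replicate t j) * (t + 1).factorial = r.factorial := by
  intro r
  induction r with
  | zero =>
    intro t s j hj hc
    exact absurd hc (by have := Finset.card_pos.2 ⟨j, hj⟩; omega)
  | succ r ih =>
    intro t s j hj hc
    match t with
    | 0 =>
      rw [Multiset.replicate_zero, add_zero]
      simpa using TT_nodup (r + 1) s (by omega)
    | (t + 1) =>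
      have hcard : s.card = (s.erase j).card + 1 := by
        rw [Finset.card_erase_of_mem hj]
        have := Finset.card_pos.2 ⟨j, hj⟩; omega
      have htf : (s.val + Multiset.replicate (t + 1) j).toFinset = s := by
        rw [Multiset.toFinset_add, Multiset.toFinset_replicate, if_neg (by omega)]
        simp only [Finset.val_toFinset]
        exact Finset.union_eq_left.2 (by simpa using hj)
      have e1 : (s.val + Multiset.replicate (t + 1) j).erase j
          = s.val + Multiset.replicate t j := by
        rw [Multiset.replicate_succ, Multiset.add_cons, Multiset.erase_cons_head]
      have e2 : ∀ a ∈ s.erase j, (s.val + Multiset.replicate (t + 1) j).erase a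
          = (s.erase a).val + Multiset.replicate (t + 1) j := by
        intro a ha
        have haj : a ≠ j := (Finset.mem_erase.1 ha).1
        have has : a ∈ s := (Finset.mem_erase.1 ha).2
        have : s.val = a ::ₘ (s.erase a).val := by
          rw [Finset.erase_val, Multiset.cons_erase (by simpa using has)]
        rw [this, Multiset.cons_add, Multiset.erase_cons_head]
      rw [TT_succ, htf, ← Finset.add_sum_erase _ _ hj, e1]
      have hIH1 : TT r (s.val + Multiset.replicate t j) * (t + 1).factorial = r.factorial :=
        ih t s j hj (by omega)
      have hIH2 : ∀ a ∈ s.erase j,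
          TT r ((s.erase a).val + Multiset.replicate (t + 1) j) * (t + 2).factorial
            = r.factorial := by
        intro a ha
        have haj : a ≠ j := (Finset.mem_erase.1 ha).1
        exact ih (t + 1) (s.erase a) j
          (Finset.mem_erase.2 ⟨Ne.symm haj, hj⟩)
          (by rw [Finset.card_erase_of_mem (Finset.mem_erase.1 ha).2]; omega)
      rw [add_mul, Finset.sum_mul]
      rw [Finset.sum_congr rfl (fun a ha => by rw [e2 a ha, hIH2 a ha])]
      rw [Finset.sum_const, Finset.card_erase_of_mem hj, smul_eq_mul]
      have hfac : (t + 1 + 1).factorial = (t + 2) * (t + 1).factorial := rfl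
      rw [hfac, ← mul_assoc, mul_comm (TT r (s.val + Multiset.replicate t j)) (t+2),
        mul_assoc, hIH1]
      have : (s.card - 1) = (s.erase j).card := by rw [Finset.card_erase_of_mem hj]
      rw [Nat.factorial_succ (r)]
      have hr1 : r + 1 = (t + 2) + (s.card - 1) := by omega
      rw [hr1]
      ring

lemma sumA_edge {r : ℕ} (e : Finset (Fin n)) (he : e.card ≤ r + 1) (i : Fin n) :
    ∑ idx ∈ (univ.filter (fun idx : Fin (r+1) → Fin n => idx 0 = i)),
      ((if e.card = r + 1 ∧ idxMultiset idx = e.val then 1 / ((Nat.factorial (r + 1 - 1)) : ℝ)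
        else if e.card < r + 1 ∧ ∃ j ∈ e,
            idxMultiset idx = e.val + Multiset.replicate (r + 1 - e.card) j then
          ((Nat.factorial (r + 1 - e.card + 1)) : ℝ) / ((Nat.factorial (r + 1)) : ℝ)
        else 0) : ℝ)
      = if i ∈ e then 1 else 0 := by
  rcases eq_or_lt_of_le he with hk | hk
  · -- full edge case
    have h1 : ∀ idx : Fin (r+1) → Fin n,
        ((if e.card = r + 1 ∧ idxMultiset idx = e.val then 1 / ((Nat.factorial (r + 1 - 1)) : ℝ)
          else if e.card < r + 1 ∧ ∃ j ∈ e,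
              idxMultiset idx = e.val + Multiset.replicate (r + 1 - e.card) j then
            ((Nat.factorial (r + 1 - e.card + 1)) : ℝ) / ((Nat.factorial (r + 1)) : ℝ)
          else 0) : ℝ)
        = if idxMultiset idx = e.val then 1 / ((Nat.factorial r) : ℝ) else 0 := by
      intro idx
      by_cases hm : idxMultiset idx = e.val
      · rw [if_pos ⟨hk, hm⟩, if_pos hm]
        norm_num
      · rw [if_neg (fun h => hm h.2), if_neg hm, if_neg (fun h => absurd hk (by omega))]
    rw [Finset.sum_congr rfl (fun idx _ => h1 idx), ← Finset.sum_filter,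
      Finset.filter_filter, Finset.sum_const]
    have hTF : (univ.filter
        (fun idx : Fin (r+1) → Fin n => idx 0 = i ∧ idxMultiset idx = e.val)).card
        = TF r i e.val := rfl
    rw [hTF, TF_eq]
    by_cases hi : i ∈ e
    · have hcerase : (e.erase i).card = r := by
        rw [Finset.card_erase_of_mem hi, hk, Nat.add_sub_cancel]
      rw [if_pos (by simpa using hi), if_pos hi, ← Finset.erase_val,
        TT_nodup r (e.erase i) hcerase]
      rw [nsmul_eq_mul, mul_one_div, div_self (by exact_mod_cast r.factorial_ne_zero)]
    · rw [if_neg (by simpa using hi), if_neg hi, zero_smul]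
  · -- small edge case
    have hne : ¬ (e.card = r + 1) := by omega
    have h1 : ∀ idx : Fin (r+1) → Fin n,
        ((if e.card = r + 1 ∧ idxMultiset idx = e.val then 1 / ((Nat.factorial (r + 1 - 1)) : ℝ)
          else if e.card < r + 1 ∧ ∃ j ∈ e,
              idxMultiset idx = e.val + Multiset.replicate (r + 1 - e.card) j then
            ((Nat.factorial (r + 1 - e.card + 1)) : ℝ) / ((Nat.factorial (r + 1)) : ℝ)
          else 0) : ℝ)
        = if (∃ j ∈ e, idxMultiset idx = e.val + Multiset.replicate (r + 1 - e.card) j) then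
            ((Nat.factorial (r + 1 - e.card + 1)) : ℝ) / ((Nat.factorial (r + 1)) : ℝ)
          else 0 := by
      intro idx
      rw [if_neg (fun h => hne h.1)]
      by_cases h2 : ∃ j ∈ e, idxMultiset idx = e.val + Multiset.replicate (r + 1 - e.card) j
      · rw [if_pos ⟨hk, h2⟩, if_pos h2]
      · rw [if_neg (fun hh => h2 hh.2), if_neg h2]
    rw [Finset.sum_congr rfl (fun idx _ => h1 idx), ← Finset.sum_filter, Finset.sum_const]
    have hsplit : ((univ.filter (fun idx : Fin (r+1) → Fin n => idx 0 = i)).filter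
        (fun idx => ∃ j ∈ e, idxMultiset idx = e.val + Multiset.replicate (r + 1 - e.card) j))
        = e.biUnion (fun j => univ.filter (fun idx : Fin (r+1) → Fin n =>
            idx 0 = i ∧ idxMultiset idx = e.val + Multiset.replicate (r + 1 - e.card) j)) := by
      ext idx
      simp only [Finset.mem_filter, Finset.mem_biUnion, Finset.mem_univ, true_and]
      tauto
    have hdisj : ∀ j1 ∈ e, ∀ j2 ∈ e, j1 ≠ j2 →
        Disjoint (univ.filter (fun idx : Fin (r+1) → Fin n =>
            idx 0 = i ∧ idxMultiset idx = e.val + Multiset.replicate (r + 1 - e.card) j1))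
          (univ.filter (fun idx : Fin (r+1) → Fin n =>
            idx 0 = i ∧ idxMultiset idx = e.val + Multiset.replicate (r + 1 - e.card) j2)) := by
      intro j1 _ j2 _ hne12
      rw [Finset.disjoint_left]
      intro idx hidx1 hidx2
      simp only [Finset.mem_filter, Finset.mem_univ, true_and] at hidx1 hidx2
      have hmm := hidx1.2.symm.trans hidx2.2
      have hcnt := congrArg (Multiset.count j1) hmm
      simp [Multiset.count_replicate, hne12, hne12.symm] at hcnt
      omega
    rw [hsplit, Finset.card_biUnion hdisj]
    have hcount : ∀ j ∈ e, (univ.filter (fun idx : Fin (r+1) → Fin n =>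
        idx 0 = i ∧ idxMultiset idx = e.val + Multiset.replicate (r + 1 - e.card) j)).card
        = if i ∈ e then TT r ((e.val + Multiset.replicate (r + 1 - e.card) j).erase i)
          else 0 := by
      intro j hj
      have hTF : (univ.filter (fun idx : Fin (r+1) → Fin n =>
          idx 0 = i ∧ idxMultiset idx = e.val + Multiset.replicate (r + 1 - e.card) j)).card
          = TF r i (e.val + Multiset.replicate (r + 1 - e.card) j) := rfl
      rw [hTF, TF_eq]
      by_cases hi : i ∈ e
      · rw [if_pos (Multiset.mem_add.2 (Or.inl (by simpa using hi))), if_pos hi]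
      · rw [if_neg ?_, if_neg hi]
        intro hmem
        rcases Multiset.mem_add.1 hmem with h | h
        · exact hi (by simpa using h)
        · exact hi ((Multiset.eq_of_mem_replicate h) ▸ hj)
    rw [Finset.sum_congr rfl hcount]
    by_cases hi : i ∈ e
    · simp only [if_pos hi]
      rw [← Finset.add_sum_erase _ _ hi]
      have hm1 : (e.val + Multiset.replicate (r + 1 - e.card) i).erase i
          = e.val + Multiset.replicate (r - e.card) i := by
        have hh : r + 1 - e.card = (r - e.card) + 1 := by omega
        rw [hh, Multiset.replicate_succ, Multiset.add_cons, Multiset.erase_cons_head]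
      have hm2 : ∀ j ∈ e.erase i, (e.val + Multiset.replicate (r + 1 - e.card) j).erase i
          = (e.erase i).val + Multiset.replicate (r + 1 - e.card) j := by
        intro j hjei
        have hh : e.val = i ::ₘ (e.erase i).val := by
          rw [Finset.erase_val, Multiset.cons_erase (by simpa using hi)]
        rw [hh, Multiset.cons_add, Multiset.erase_cons_head]
      have hsum2 : (∑ j ∈ e.erase i,
          TT r ((e.val + Multiset.replicate (r + 1 - e.card) j).erase i))
          = ∑ j ∈ e.erase i, TT r ((e.erase i).val + Multiset.replicate (r + 1 - e.card) j) :=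
        Finset.sum_congr rfl (fun j hj => congrArg (TT r) (hm2 j hj))
      rw [hm1, hsum2]
      have hc1 : 1 ≤ e.card := Finset.card_pos.2 ⟨i, hi⟩
      have hT1 : TT r (e.val + Multiset.replicate (r - e.card) i) * ((r - e.card) + 1).factorial
          = r.factorial := TT_rep r (r - e.card) e i hi (by omega)
      have hT2 : ∀ j ∈ e.erase i,
          TT r ((e.erase i).val + Multiset.replicate (r + 1 - e.card) j)
            * ((r + 1 - e.card) + 1).factorial = r.factorial := fun j hjei =>
        TT_rep r _ (e.erase i) j hjei (by rw [Finset.card_erase_of_mem hi]; omega)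
      have hN : (TT r (e.val + Multiset.replicate (r - e.card) i)
          + ∑ j ∈ e.erase i, TT r ((e.erase i).val + Multiset.replicate (r + 1 - e.card) j))
          * ((r + 1 - e.card) + 1).factorial = (r + 1).factorial := by
        rw [add_mul, Finset.sum_mul, Finset.sum_congr rfl (fun j hjei => hT2 j hjei),
          Finset.sum_const, smul_eq_mul, Finset.card_erase_of_mem hi]
        have hstep : (r + 1 - e.card + 1).factorial
            = ((r - e.card) + 2) * ((r - e.card) + 1).factorial := by
          have hh : r + 1 - e.card + 1 = (r - e.card) + 2 := by omega
          rw [hh]; rfl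
        rw [hstep, ← mul_assoc, mul_comm (TT r (e.val + Multiset.replicate (r - e.card) i))
          ((r - e.card) + 2), mul_assoc, hT1, Nat.factorial_succ]
        have hh : r + 1 = (r - e.card + 2) + (e.card - 1) := by omega
        rw [hh]; ring
      rw [nsmul_eq_mul, mul_div_assoc', ← Nat.cast_mul, hN,
        div_self (by exact_mod_cast (r+1).factorial_ne_zero)]
    · simp only [if_neg hi]
      rw [Finset.sum_const, smul_zero, zero_smul]

lemma sumA {r : ℕ} (E : Finset (Finset (Fin n))) (hrk : ∀ e ∈ E, e.card ≤ r + 1) (i : Fin n) :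
    ∑ idx ∈ (univ.filter (fun idx : Fin (r+1) → Fin n => idx 0 = i)),
      (adjEntry (r+1) E idx : ℝ) = (deg E i : ℝ) := by
  unfold adjEntry
  rw [Finset.sum_comm]
  have hdeg : ((deg E i : ℕ) : ℝ) = ∑ e ∈ E, if i ∈ e then (1 : ℝ) else 0 := by
    rw [deg, Finset.card_filter]
    push_cast
    rfl
  rw [hdeg]
  exact Finset.sum_congr rfl (fun e he => sumA_edge e (hrk e he) i)


lemma prod_eq_multiset {k : ℕ} (idx : Fin k → Fin n) (x : Fin n → ℝ) :
    ∏ l, x (idx l) = ((idxMultiset idx).map x).prod := by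
  rw [idxMultiset]
  rw [show (Multiset.map x ↑(List.ofFn idx)) = (((List.ofFn idx).map x : List ℝ) : Multiset ℝ)
    from rfl]
  rw [Multiset.prod_coe, List.map_ofFn, List.prod_ofFn]
  rfl

lemma exists_tuple {k : ℕ} [NeZero k] (m : Multiset (Fin n)) (hm : Multiset.card m = k)
    (i : Fin n) (hi : i ∈ m) :
    ∃ idx : Fin k → Fin n, idx 0 = i ∧ idxMultiset idx = m := by
  have hk1 : 1 ≤ k := Nat.one_le_iff_ne_zero.2 (NeZero.ne k)
  set l : List (Fin n) := i :: (m.erase i).toList with hl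
  have hlen : l.length = k := by
    rw [hl]
    simp only [List.length_cons, Multiset.length_toList, Multiset.card_erase_of_mem hi,
      hm, Nat.pred_eq_sub_one]
    omega
  refine ⟨fun p => l.get (Fin.cast hlen.symm p), ?_, ?_⟩
  · rfl
  · rw [idxMultiset]
    have hofn : List.ofFn (fun p : Fin k => l.get (Fin.cast hlen.symm p)) = l := by
      apply List.ext_getElem
      · simp [hlen]
      · intro p h1 h2
        simp [List.getElem_ofFn]
    rw [hofn, hl, ← Multiset.cons_coe, Multiset.coe_toList, Multiset.cons_erase hi]

lemma adjEntry_nonneg {k : ℕ} (E : Finset (Finset (Fin n))) (idx : Fin k → Fin n) :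
    (0:ℝ) ≤ adjEntry k E idx := by
  refine Finset.sum_nonneg fun e _ => ?_
  split_ifs <;> positivity

lemma adjEntry_pos {k : ℕ} (E : Finset (Finset (Fin n))) (e : Finset (Fin n)) (he : e ∈ E)
    (hek : e.card ≤ k) (v : Fin n) (hv : v ∈ e) (idx : Fin k → Fin n)
    (hms : idxMultiset idx = e.val + Multiset.replicate (k - e.card) v) :
    (0 : ℝ) < adjEntry k E idx := by
  have hterm : (0:ℝ) < (if e.card = k ∧ idxMultiset idx = e.val then
        1 / ((Nat.factorial (k-1)) : ℝ)
      else if e.card < k ∧ ∃ j ∈ e, idxMultiset idx = e.val + Multiset.replicate (k - e.card) j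
      then ((Nat.factorial (k - e.card + 1)) : ℝ) / ((Nat.factorial k) : ℝ) else 0) := by
    rcases eq_or_lt_of_le hek with hq | hq
    · rw [if_pos ⟨hq, by rw [hms, show k - e.card = 0 from by omega]; simp⟩]
      have := (k-1).factorial_pos
      positivity
    · rw [if_neg (fun h => absurd h.1 (by omega)), if_pos ⟨hq, v, hv, hms⟩]
      have h1 := (k - e.card + 1).factorial_pos
      have h2 := k.factorial_pos
      positivity
  refine lt_of_lt_of_le hterm ?_
  rw [adjEntry]
  exact Finset.single_le_sum
    (f := fun e : Finset (Fin n) => if e.card = k ∧ idxMultiset idx = e.val then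
        1 / ((Nat.factorial (k-1)) : ℝ)
      else if e.card < k ∧ ∃ j ∈ e, idxMultiset idx = e.val + Multiset.replicate (k - e.card) j
      then ((Nat.factorial (k - e.card + 1)) : ℝ) / ((Nat.factorial k) : ℝ) else 0)
    (fun e' _ => by split_ifs <;> positivity) he

lemma forcing {ι : Type*} (F : Finset ι) (w p : ι → ℝ) (c : ℝ)
    (hw : ∀ t ∈ F, 0 ≤ w t) (hp : ∀ t ∈ F, |p t| ≤ |c|)
    (hsum : ∑ t ∈ F, w t * p t = -((∑ t ∈ F, w t) * c)) :
    ∀ t ∈ F, w t ≠ 0 → p t = -c := by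
  have main : ∀ (c' : ℝ), 0 ≤ c' → ∀ (p' : ι → ℝ), (∀ t ∈ F, |p' t| ≤ |c'|) →
      (∑ t ∈ F, w t * p' t = -((∑ t ∈ F, w t) * c')) →
      ∀ t ∈ F, w t ≠ 0 → p' t = -c' := by
    intro c' hc' p' hp' hsum' t ht hwt
    have h0 : ∑ u ∈ F, w u * (p' u + c') = 0 := by
      rw [Finset.sum_congr rfl (fun u _ => mul_add (w u) (p' u) c'),
        Finset.sum_add_distrib, ← Finset.sum_mul, hsum']
      ring
    have hnn : ∀ u ∈ F, 0 ≤ w u * (p' u + c') := by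
      intro u hu
      have h1 := (abs_le.1 (hp' u hu)).1
      rw [abs_of_nonneg hc'] at h1
      exact mul_nonneg (hw u hu) (by linarith)
    have hz := (Finset.sum_eq_zero_iff_of_nonneg hnn).1 h0 t ht
    rcases mul_eq_zero.1 hz with h | h
    · exact absurd h hwt
    · linarith
  rcases le_or_gt 0 c with hc | hc
  · exact main c hc p hp hsum
  · intro t ht hwt
    have hres := main (-c) (by linarith) (fun u => -p u)
      (fun u hu => by rw [abs_neg, abs_neg]; exact hp u hu)
      (by
        rw [Finset.sum_congr rfl (fun u _ => mul_neg (w u) (p u)), Finset.sum_neg_distrib,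
          hsum]
        ring) t ht hwt
    linarith

lemma eigen_eq {r : ℕ} (E : Finset (Finset (Fin n))) (x : Fin n → ℝ) (i : Fin n)
    (h : tApply (r+1) (qEntry (r+1) E) x i = 0) :
    (deg E i : ℝ) * x i ^ (r + 1)
      + ∑ idx ∈ (univ.filter (fun idx : Fin (r+1) → Fin n => idx 0 = i)),
          adjEntry (r+1) E idx * ∏ l, x (idx l) = 0 := by
  rw [tApply, ← Finset.sum_filter] at h
  have hsplit : ∀ idx ∈ (univ.filter (fun idx : Fin (r+1) → Fin n => idx 0 = i)),
      qEntry (r+1) E idx * ∏ l ∈ Finset.univ.erase 0, x (idx l)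
      = (if ∀ l, idx l = idx 0 then ((deg E (idx 0) : ℝ)) else 0)
          * ∏ l ∈ Finset.univ.erase 0, x (idx l)
        + adjEntry (r+1) E idx * ∏ l ∈ Finset.univ.erase 0, x (idx l) := by
    intro idx _
    rw [qEntry, add_mul]
  rw [Finset.sum_congr rfl hsplit, Finset.sum_add_distrib] at h
  have hdpart : ∑ idx ∈ (univ.filter (fun idx : Fin (r+1) → Fin n => idx 0 = i)),
      (if ∀ l, idx l = idx 0 then ((deg E (idx 0) : ℝ)) else 0)
        * ∏ l ∈ Finset.univ.erase 0, x (idx l)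
      = (deg E i : ℝ) * x i ^ r := by
    have hite : ∀ idx : Fin (r+1) → Fin n,
        (if ∀ l, idx l = idx 0 then ((deg E (idx 0) : ℝ)) else 0)
          * ∏ l ∈ Finset.univ.erase 0, x (idx l)
        = (if ∀ l, idx l = idx 0 then
            ((deg E (idx 0) : ℝ)) * ∏ l ∈ Finset.univ.erase 0, x (idx l) else 0) := by
      intro idx; rw [ite_mul, zero_mul]
    rw [Finset.sum_congr rfl (fun idx _ => hite idx), ← Finset.sum_filter,
      Finset.filter_filter]
    have hone : (univ.filter (fun idx : Fin (r+1) → Fin n => idx 0 = i ∧ ∀ l, idx l = idx 0))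
        = {fun _ => i} := by
      ext idx
      simp only [Finset.mem_filter, Finset.mem_univ, true_and, Finset.mem_singleton]
      constructor
      · rintro ⟨h0, hall⟩; funext l; rw [hall l, h0]
      · rintro rfl; exact ⟨rfl, fun l => rfl⟩
    rw [hone, Finset.sum_singleton]
    have hcard : ((univ : Finset (Fin (r+1))).erase 0).card = r := by
      rw [Finset.card_erase_of_mem (Finset.mem_univ _), Finset.card_univ, Fintype.card_fin]
      omega
    simp [Finset.prod_const, hcard]
  rw [hdpart] at h
  have hmul : ∀ idx ∈ (univ.filter (fun idx : Fin (r+1) → Fin n => idx 0 = i)),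
      adjEntry (r+1) E idx * ∏ l, x (idx l)
      = x i * (adjEntry (r+1) E idx * ∏ l ∈ Finset.univ.erase 0, x (idx l)) := by
    intro idx hidx
    rw [Finset.mem_filter] at hidx
    rw [← Finset.mul_prod_erase univ (fun l => x (idx l)) (Finset.mem_univ 0), hidx.2]
    ring
  rw [Finset.sum_congr rfl hmul, ← Finset.mul_sum]
  have hrw : (deg E i : ℝ) * x i ^ (r+1)
      + x i * (∑ idx ∈ (univ.filter (fun idx : Fin (r+1) → Fin n => idx 0 = i)),
          adjEntry (r+1) E idx * ∏ l ∈ Finset.univ.erase 0, x (idx l))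
      = x i * ((deg E i : ℝ) * x i ^ r
        + ∑ idx ∈ (univ.filter (fun idx : Fin (r+1) → Fin n => idx 0 = i)),
          adjEntry (r+1) E idx * ∏ l ∈ Finset.univ.erase 0, x (idx l)) := by ring
  rw [hrw, h, mul_zero]

lemma main_aux {r : ℕ} (E : Finset (Finset (Fin n)))
    (hE : ∀ e ∈ E, e.Nonempty) (hconn : Conn E) (hrank : HasRank E (r+1))
    (x : Fin n → ℝ) (hx : x ≠ 0)
    (heig : ∀ i, tApply (r+1) (qEntry (r+1) E) x i = 0)
    (j : Fin n) (hmax : ∀ i, |x i| ≤ |x j|) :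
    Even (r+1) ∧
      ((∀ e ∈ E, ∀ i ∈ e, (∏ v ∈ e, x v) * x i ^ (r + 1 - e.card) = -(x j) ^ (r+1)) ∧
       (∀ e ∈ E, Even e.card ∧ Odd (e.filter (fun u => x u = -|x j|)).card)) := by
  obtain ⟨hrk, e0, he0, hce0⟩ := hrank
  have hMpos : 0 < |x j| := by
    rcases Function.ne_iff.1 hx with ⟨v, hv⟩
    exact lt_of_lt_of_le (abs_pos.2 hv) (hmax v)
  -- consequence of the eigen-equation and maximality: forcing of the products
  have hforce : ∀ i : Fin n, |x i| = |x j| →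
      ∀ idx : Fin (r+1) → Fin n, idx 0 = i → adjEntry (r+1) E idx ≠ (0:ℝ) →
      ∏ l, x (idx l) = -(x i ^ (r+1)) := by
    intro i hi idx hidx0 hne
    have heq := eigen_eq E x i (heig i)
    have hsum : ∑ idx ∈ (univ.filter (fun idx : Fin (r+1) → Fin n => idx 0 = i)),
        adjEntry (r+1) E idx * ∏ l, x (idx l)
        = -((∑ idx ∈ (univ.filter (fun idx : Fin (r+1) → Fin n => idx 0 = i)),
            adjEntry (r+1) E idx) * (x i ^ (r+1))) := by
      rw [sumA E hrk i]
      linarith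
    refine forcing _ _ _ _ (fun t _ => adjEntry_nonneg E t) (fun t _ => ?_) hsum idx
      (Finset.mem_filter.2 ⟨Finset.mem_univ _, hidx0⟩) hne
    calc |∏ l, x (t l)| = ∏ l, |x (t l)| := Finset.abs_prod _ _
      _ ≤ ∏ l : Fin (r+1), |x j| :=
          Finset.prod_le_prod (fun _ _ => abs_nonneg _) (fun l _ => hmax _)
      _ = |x j| ^ (r+1) := by rw [Finset.prod_const, Finset.card_univ, Fintype.card_fin]
      _ = |x i ^ (r+1)| := by rw [abs_pow, hi]
  -- local identity on each edge
  have hloc : ∀ i : Fin n, |x i| = |x j| → ∀ e ∈ E, i ∈ e → ∀ v ∈ e,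
      (∏ u ∈ e, x u) * x v ^ (r + 1 - e.card) = -(x i ^ (r+1)) := by
    intro i hi e he hie v hv
    have hsle := hrk e he
    have hcm : Multiset.card (e.val + Multiset.replicate (r + 1 - e.card) v) = r + 1 := by
      rw [Multiset.card_add, Multiset.card_replicate]
      have hcv : Multiset.card e.val = e.card := rfl
      omega
    obtain ⟨idx, hidx0, hidxm⟩ := exists_tuple _ hcm i
      (Multiset.mem_add.2 (Or.inl (by simpa using hie)))
    have hP : ∏ l, x (idx l) = (∏ u ∈ e, x u) * x v ^ (r + 1 - e.card) := by
      rw [prod_eq_multiset, hidxm, Multiset.map_add, Multiset.prod_add,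
        Multiset.map_replicate, Multiset.prod_replicate, ← Finset.prod_eq_multiset_prod]
    rw [← hP]
    exact hforce i hi idx hidx0
      (ne_of_gt (adjEntry_pos E e he hsle v hv idx hidxm))
  -- all coordinates have maximal modulus
  have hmod : ∀ v, |x v| = |x j| := by
    intro v
    have hpath := hconn j v
    induction hpath with
    | refl => rfl
    | tail _ hbc ih =>
      rename_i b c _
      obtain ⟨e, he, hbe, hce⟩ := hbc
      have hsle := hrk e he
      have hcard1 : 1 ≤ e.card := Finset.card_pos.2 ⟨c, hce⟩
      have h1 := hloc b ih e he hbe c hce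
      refine le_antisymm (hmax _) ?_
      by_contra hlt
      push_neg at hlt
      have habs : |(∏ u ∈ e, x u) * x c ^ (r + 1 - e.card)| = |x j| ^ (r+1) := by
        rw [h1, abs_neg, abs_pow, ih]
      have hb1 : |∏ u ∈ e, x u| ≤ |x c| * |x j| ^ (e.card - 1) := by
        rw [Finset.abs_prod, ← Finset.mul_prod_erase e _ hce]
        refine mul_le_mul_of_nonneg_left ?_ (abs_nonneg _)
        calc ∏ u ∈ e.erase c, |x u| ≤ ∏ u ∈ e.erase c, |x j| :=
              Finset.prod_le_prod (fun _ _ => abs_nonneg _) (fun u _ => hmax u)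
          _ = |x j| ^ (e.card - 1) := by
              rw [Finset.prod_const, Finset.card_erase_of_mem hce]
      have hb2 : |x c ^ (r + 1 - e.card)| ≤ |x j| ^ (r + 1 - e.card) := by
        rw [abs_pow]
        exact pow_le_pow_left₀ (abs_nonneg _) (hmax c) _
      have hcomb : |x j| ^ (r+1) ≤ |x c| * |x j| ^ r := by
        rw [← habs, abs_mul]
        calc |∏ u ∈ e, x u| * |x c ^ (r + 1 - e.card)|
            ≤ (|x c| * |x j| ^ (e.card - 1)) * (|x j| ^ (r + 1 - e.card)) :=
              mul_le_mul hb1 hb2 (abs_nonneg _) (by positivity)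
          _ = |x c| * |x j| ^ r := by
              rw [mul_assoc, ← pow_add]
              congr 2
              omega
      have hfin : |x j| ^ (r+1) < |x j| ^ (r+1) := by
        calc |x j| ^ (r+1) ≤ |x c| * |x j| ^ r := hcomb
          _ < |x j| * |x j| ^ r := by
              exact mul_lt_mul_of_pos_right hlt (by positivity)
          _ = |x j| ^ (r+1) := by ring
      exact absurd hfin (lt_irrefl _)
  -- all k-th powers agree
  have hpow : ∀ v, x v ^ (r+1) = x j ^ (r+1) := by
    intro v
    have hpath := hconn j v
    induction hpath with
    | refl => rfl
    | tail _ hbc ih =>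
      rename_i b c _
      obtain ⟨e, he, hbe, hce⟩ := hbc
      have h1 := hloc b (hmod b) e he hbe c hce
      have h2 := hloc c (hmod c) e he hce c hce
      have h3 := h1.symm.trans h2
      rw [← ih]
      linarith
  -- k is even
  have heven : Even (r+1) := by
    by_contra hodd
    rw [Nat.not_even_iff_odd] at hodd
    have hall : ∀ v, x v = x j := by
      intro v
      rcases abs_eq_abs.1 (hmod v) with h | h
      · exact h
      · exfalso
        have hpp := hpow v
        rw [h, hodd.neg_pow] at hpp
        have hz : x j ^ (r+1) = 0 := by linarith
        have hxj : x j = 0 := pow_eq_zero_iff (Nat.succ_ne_zero r) |>.1 hz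
        rw [hxj, abs_zero] at hMpos
        exact lt_irrefl _ hMpos
    obtain ⟨i0, hi0⟩ := hE e0 he0
    have h1 := hloc i0 (hmod i0) e0 he0 hi0 i0 hi0
    have hprod : ∏ v ∈ e0, x v = x j ^ e0.card := by
      rw [Finset.prod_congr rfl (fun v _ => hall v), Finset.prod_const]
    rw [hprod, hall i0, ← pow_add,
      show e0.card + (r + 1 - e0.card) = r + 1 from by have := hrk e0 he0; omega] at h1
    have hz : x j ^ (r+1) = 0 := by linarith
    have hxj : x j = 0 := pow_eq_zero_iff (Nat.succ_ne_zero r) |>.1 hz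
    rw [hxj, abs_zero] at hMpos
    exact lt_irrefl _ hMpos
  -- first bullet
  have hb1 : ∀ e ∈ E, ∀ i ∈ e,
      (∏ v ∈ e, x v) * x i ^ (r + 1 - e.card) = -(x j) ^ (r+1) := by
    intro e he i hi
    have h1 := hloc i (hmod i) e he hi i hi
    rw [hpow i] at h1
    exact h1
  refine ⟨heven, hb1, ?_⟩
  -- second bullet
  intro e he
  have hsle := hrk e he
  obtain ⟨i0, hi0⟩ := hE e he
  have hMk := pow_pos hMpos (r+1)
  have hsgn : ∀ u ∈ e, x u = |x j| ∨ x u = -|x j| := fun u _ =>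
    (abs_eq (le_of_lt hMpos)).1 (hmod u)
  have hpowM : -(x j) ^ (r+1) = -(|x j| ^ (r+1)) := by
    rw [heven.pow_abs]
  have hprodne : (∏ v ∈ e, x v) ≠ 0 := by
    refine Finset.prod_ne_zero_iff.2 (fun v _ => ?_)
    intro h0
    have := hmod v
    rw [h0, abs_zero] at this
    linarith
  have hexneg : ∃ q ∈ e, x q = -|x j| := by
    by_contra hno
    push_neg at hno
    have hallpos : ∀ u ∈ e, x u = |x j| := fun u hu => (hsgn u hu).resolve_right (hno u hu)
    have h1 := hb1 e he i0 hi0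
    rw [Finset.prod_congr rfl hallpos, Finset.prod_const, hallpos i0 hi0, ← pow_add,
      show e.card + (r + 1 - e.card) = r + 1 from by omega, hpowM] at h1
    linarith
  have hexpos : ∃ p ∈ e, x p = |x j| := by
    by_contra hno
    push_neg at hno
    have hallneg : ∀ u ∈ e, x u = -|x j| := fun u hu => (hsgn u hu).resolve_left (hno u hu)
    have h1 := hb1 e he i0 hi0
    rw [Finset.prod_congr rfl hallneg, Finset.prod_const, hallneg i0 hi0, ← pow_add,
      show e.card + (r + 1 - e.card) = r + 1 from by omega, heven.neg_pow, hpowM] at h1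
    linarith
  obtain ⟨p, hp, hxp⟩ := hexpos
  obtain ⟨q, hq, hxq⟩ := hexneg
  have h1 := hb1 e he p hp
  have h2 := hb1 e he q hq
  rw [hxp] at h1
  rw [hxq] at h2
  -- the edge has even cardinality
  have hte : Even (r + 1 - e.card) := by
    have heq2 : (∏ v ∈ e, x v) * |x j| ^ (r + 1 - e.card)
        = (∏ v ∈ e, x v) * (-|x j|) ^ (r + 1 - e.card) := h1.trans h2.symm
    have h3 : |x j| ^ (r + 1 - e.card) = (-|x j|) ^ (r + 1 - e.card) :=
      mul_left_cancel₀ hprodne heq2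
    rw [neg_pow] at h3
    have hMn : |x j| ^ (r + 1 - e.card) ≠ 0 := by positivity
    have h4 : ((-1:ℝ)) ^ (r + 1 - e.card) = 1 :=
      mul_right_cancel₀ hMn (by rw [one_mul, ← h3])
    exact (neg_one_pow_eq_one_iff_even (by norm_num : (-1:ℝ) ≠ 1)).1 h4
  have hec : Even e.card := by
    rw [Nat.even_iff] at hte heven ⊢
    omega
  refine ⟨hec, ?_⟩
  -- odd number of negative vertices
  have hmle : (e.filter (fun u => x u = -|x j|)).card ≤ e.card := Finset.card_filter_le _ _
  have hcsum : (e.filter (fun u => x u = -|x j|)).card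
      + (e.filter (fun u => ¬ x u = -|x j|)).card = e.card :=
    Finset.card_filter_add_card_filter_not _
  have hprodsplit : (∏ v ∈ e, x v)
      = (-1:ℝ) ^ (e.filter (fun u => x u = -|x j|)).card * |x j| ^ e.card := by
    rw [← Finset.prod_filter_mul_prod_filter_not e (fun u => x u = -|x j|) x]
    have hA : ∏ v ∈ e.filter (fun u => x u = -|x j|), x v
        = (-|x j|) ^ (e.filter (fun u => x u = -|x j|)).card := by
      rw [Finset.prod_congr rfl (fun v hv => (Finset.mem_filter.1 hv).2), Finset.prod_const]
    have hB : ∏ v ∈ e.filter (fun u => ¬ x u = -|x j|), x v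
        = |x j| ^ (e.filter (fun u => ¬ x u = -|x j|)).card := by
      rw [Finset.prod_congr rfl (fun v hv => ?_), Finset.prod_const]
      have hvv := Finset.mem_filter.1 hv
      exact (hsgn v hvv.1).resolve_right hvv.2
    rw [hA, hB, neg_pow, mul_assoc, ← pow_add, hcsum]
  have h5 := h1
  rw [hprodsplit, hpowM, mul_assoc, ← pow_add,
    show e.card + (r + 1 - e.card) = r + 1 from by omega] at h5
  by_contra hno
  rw [Nat.not_odd_iff_even] at hno
  rw [hno.neg_one_pow, one_mul] at h5
  linarith


end Stmt13Aux

/-- if `0` is an H-eigenvalue of the signless Laplacian `Q_G` of a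
connected hypergraph, with real eigenvector `x`, then `k` is even; for a coordinate
`j` of maximal `|x_j|`, every edge `e` and `i ∈ e` satisfy
`x^e xᵢ^{k-|e|} = -x_j^k`; and with `V1 = {u : x_u = -|x_j|}` every edge has even
cardinality and meets `V1` in an odd number of vertices, so `G` is odd-bipartite. -/
theorem stmt13 {n k : ℕ} [NeZero k] (E : Finset (Finset (Fin n)))
    (hE : ∀ e ∈ E, e.Nonempty) (hconn : Conn E) (hrank : HasRank E k)
    (x : Fin n → ℝ) (hx : x ≠ 0)
    (heig : ∀ i, tApply k (qEntry k E) x i = 0) :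
    Even k ∧
    ∀ j : Fin n, (∀ i, |x i| ≤ |x j|) →
      ((∀ e ∈ E, ∀ i ∈ e, (∏ v ∈ e, x v) * x i ^ (k - e.card) = -(x j) ^ k) ∧
       (∀ e ∈ E, Even e.card ∧ Odd (e.filter (fun u => x u = -|x j|)).card)) := by
  obtain ⟨r, rfl⟩ : ∃ r, k = r + 1 := ⟨k - 1, (Nat.succ_pred_eq_of_ne_zero (NeZero.ne k)).symm⟩
  obtain ⟨e0, he0, hc0⟩ := hrank.2
  obtain ⟨v0, hv0⟩ := hE e0 he0
  obtain ⟨j0, -, hj0⟩ := Finset.exists_max_image (univ : Finset (Fin n)) (fun i => |x i|)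
    ⟨v0, Finset.mem_univ v0⟩
  exact ⟨(Stmt13Aux.main_aux E hE hconn hrank x hx heig j0
      (fun i => hj0 i (Finset.mem_univ i))).1,
    fun j hj => (Stmt13Aux.main_aux E hE hconn hrank x hx heig j hj).2⟩
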